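/- Let T_i : ℝ → ℝ (i ∈ N) be differentiable functions satisfying the zone dynamics C_i Ṫ_i = (T^o − T_i)/R_i + Σ_{j∈N(i)} (T_j − T_i)/R_{ij} + (T_{fi} − T_i)/R_{afi} + Q_i, and let ζ_i : ℝ → ℝ satisfy ζ̇_i = k_{ζ_i}((T^o − Z_i)/R_i + Σ_{j∈N(i)} (Z_j − Z_i)/R_{ij} + (Z_{fi} − Z_i)/R_{afi} + Q_i) with k_{ζ_i} > 0, for given functions Z_i, Z_{fi}, T_{fi}. Then the transformed variable ζ̃_i := ζ_i/k_{ζ_i} − C_i T_i satisfies ζ̃̇_i = (T_i − Z_i)/R_i + Σ_{j∈N(i)} ((T_i − Z_i) − (T_j − Z_j))/R_{ij} + ((T_i − Z_i) − (T_{fi} − Z_{fi}))/R_{afi}, an expression that involves neither the outdoor temperature T^o nor the heat gains Q_i. -/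

import Mathlib

open Finset

/-- Along the zone dynamics and the dual dynamics of `ζᵢ`, the
transformed variable `ζ̃ᵢ = ζᵢ/k_{ζᵢ} − Cᵢ Tᵢ` obeys a differential equation that involves
neither the outdoor temperature `To` nor the heat gains `Qᵢ`. -/
theorem stmt_15
    (n : ℕ)
    (G : SimpleGraph (Fin n)) [DecidableRel G.Adj] (hG : G.Connected)
    (C Ri Raf : Fin n → ℝ) (Rij : Fin n → Fin n → ℝ)
    (hC : ∀ i, 0 < C i) (hRi : ∀ i, 0 < Ri i) (hRaf : ∀ i, 0 < Raf i)
    (hRij : ∀ i j, G.Adj i j → 0 < Rij i j) (hRsym : ∀ i j, Rij i j = Rij j i)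
    (To : ℝ) (Q : Fin n → ℝ)
    (kζ : Fin n → ℝ) (hkζ : ∀ i, 0 < kζ i)
    (T Tf Z Zf ζ : ℝ → Fin n → ℝ)
    -- zone dynamics
    (hT : ∀ i t, HasDerivAt (fun τ => T τ i)
        (((To - T t i) / Ri i + (∑ j ∈ G.neighborFinset i, (T t j - T t i) / Rij i j)
          + (Tf t i - T t i) / Raf i + Q i) / C i) t)
    -- dual dynamics of ζ
    (hζ : ∀ i t, HasDerivAt (fun τ => ζ τ i)
        (kζ i * ((To - Z t i) / Ri i + (∑ j ∈ G.neighborFinset i, (Z t j - Z t i) / Rij i j)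
          + (Zf t i - Z t i) / Raf i + Q i)) t) :
    -- the transformed variable ζ̃ᵢ = ζᵢ/kζᵢ − Cᵢ Tᵢ obeys a disturbance-free equation
    ∀ i t, HasDerivAt (fun τ => ζ τ i / kζ i - C i * T τ i)
        ((T t i - Z t i) / Ri i
          + (∑ j ∈ G.neighborFinset i, ((T t i - Z t i) - (T t j - Z t j)) / Rij i j)
          + ((T t i - Z t i) - (Tf t i - Zf t i)) / Raf i) t := by
  intro i t
  have h1 := (hζ i t).div_const (kζ i)
  have h2 := ((hT i t).const_mul (C i))
  have h := h1.sub h2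
  refine h.congr_deriv ?_
  have hk : kζ i ≠ 0 := (hkζ i).ne'
  have hc : C i ≠ 0 := (hC i).ne'
  rw [mul_div_cancel_left₀ _ hk, mul_div_cancel₀ _ hc]
  have hsum : ∀ j ∈ G.neighborFinset i,
      ((T t i - Z t i) - (T t j - Z t j)) / Rij i j
        = (Z t j - Z t i) / Rij i j - (T t j - T t i) / Rij i j := by
    intro j hj
    ring
  rw [Finset.sum_congr rfl hsum, Finset.sum_sub_distrib]
  ring
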